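/- Let S_λ be a nonzero formally normal weighted shift on a directed tree T with weights {λ_v}_{v∈V°}. Then sup_{v∈V} ‖S_λ e_v‖ < ∞, so S_λ is a bounded operator on ℓ²(V); moreover S_λ is normal. -/

import Mathlib

open scoped ENNReal ComplexConjugate Classical

/-- A directed tree: a connected directed graph with no (directed) circuits in which
every vertex has at most one parent and at most one vertex has no parent (the root). -/
structure DirectedTree (V : Type*) where
  E : V → V → Prop
  parent_unique : ∀ ⦃u₁ u₂ v : V⦄, E u₁ v → E u₂ v → u₁ = u₂
  no_circuit : ∀ v : V, ¬ Relation.TransGen E v v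
  connected : ∀ u v : V, Relation.ReflTransGen (fun a b => E a b ∨ E b a) u v
  root_unique : ∀ ⦃r₁ r₂ : V⦄, (∀ u, ¬ E u r₁) → (∀ u, ¬ E u r₂) → r₁ = r₂

namespace DirectedTree

variable {V : Type*} (T : DirectedTree V)

/-- `v ∈ V°`, i.e. `v` is not a root. -/
def HasParent (v : V) : Prop := ∃ u, T.E u v

/-- The parent partial map (junk value `v` itself at a root). -/
noncomputable def par (v : V) : V := if h : T.HasParent v then h.choose else v

theorem par_spec {v : V} (h : T.HasParent v) : T.E (T.par v) v := by
  rw [par, dif_pos h]; exact h.choose_spec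

/-- the child set of a vertex -/
def chi (u : V) : Set V := {v | T.E u v}

/-- the child set of a set of vertices -/
def chiSet (W : Set V) : Set V := {v | ∃ u ∈ W, T.E u v}

/-- the iterated child set `Chi^n(u)` -/
def chiN (n : ℕ) (u : V) : Set V := (T.chiSet)^[n] {u}

/-- the set of descendants of a vertex -/
def des (u : V) : Set V := ⋃ n : ℕ, T.chiN n u

/-- the iterated parent partial map, as an `Option`-valued map -/
noncomputable def parN : ℕ → V → Option V
  | 0, v => some v
  | n + 1, v => if T.HasParent v then parN n (T.par v) else none

end DirectedTree

/-- the Hilbert space `ℓ²(V)` -/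
abbrev l2 (V : Type*) : Type _ := lp (fun _ : V => ℂ) 2

/-- the canonical orthonormal basis vector `e_u` of `ℓ²(V)` -/
noncomputable def evec {V : Type*} (u : V) : l2 V := lp.single 2 u 1

variable {V : Type*}

/-- the formal action `Λ_T` of a weighted shift with weights `lam` -/
noncomputable def lamMap (T : DirectedTree V) (lam : V → ℂ) (f : V → ℂ) : V → ℂ :=
  fun v => if T.HasParent v then lam v * f (T.par v) else 0

theorem lamMap_add (T : DirectedTree V) (lam : V → ℂ) (f g : V → ℂ) :
    lamMap T lam (f + g) = lamMap T lam f + lamMap T lam g := by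
  funext v
  simp only [lamMap, Pi.add_apply]
  split_ifs <;> ring

theorem lamMap_smul (T : DirectedTree V) (lam : V → ℂ) (c : ℂ) (f : V → ℂ) :
    lamMap T lam (c • f) = c • lamMap T lam f := by
  funext v
  simp only [lamMap, Pi.smul_apply, smul_eq_mul]
  split_ifs <;> ring

/-- the (maximal) domain of the weighted shift `S_lam` -/
noncomputable def shiftDomain (T : DirectedTree V) (lam : V → ℂ) : Submodule ℂ (l2 V) where
  carrier := {f : l2 V | Memℓp (lamMap T lam ⇑f) 2}
  zero_mem' := by
    have : lamMap T lam ⇑(0 : l2 V) = 0 := by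
      funext v; simp [lamMap]
    simp only [Set.mem_setOf_eq, this]
    exact zero_memℓp
  add_mem' := by
    intro f g hf hg
    have h : lamMap T lam ⇑(f + g) = lamMap T lam ⇑f + lamMap T lam ⇑g := by
      rw [lp.coeFn_add]; exact lamMap_add T lam _ _
    simp only [Set.mem_setOf_eq, h]
    exact hf.add hg
  smul_mem' := by
    intro c f hf
    have h : lamMap T lam ⇑(c • f) = c • lamMap T lam ⇑f := by
      rw [lp.coeFn_smul]; exact lamMap_smul T lam _ _
    simp only [Set.mem_setOf_eq, h]
    exact hf.const_smul c

/-- the weighted shift `S_lam` on the directed tree `T`, as an unbounded operator in `ℓ²(V)` -/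
noncomputable def shift (T : DirectedTree V) (lam : V → ℂ) : l2 V →ₗ.[ℂ] l2 V where
  domain := shiftDomain T lam
  toFun :=
    { toFun := fun f => ⟨lamMap T lam ⇑(f : l2 V), f.2⟩
      map_add' := by
        intro f g
        apply Subtype.ext
        exact lamMap_add T lam _ _
      map_smul' := by
        intro c f
        apply Subtype.ext
        exact lamMap_smul T lam _ _ }
/-- A densely defined operator `A` is formally normal if `dom A ⊆ dom A*` and
`‖A* h‖ = ‖A h‖` for all `h ∈ dom A`. -/
def FormallyNormal {H : Type*} [NormedAddCommGroup H] [InnerProductSpace ℂ H]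
    [CompleteSpace H] (A : H →ₗ.[ℂ] H) : Prop :=
  Dense (A.domain : Set H) ∧ A.domain ≤ A.adjoint.domain ∧
    ∀ (f : H) (hf : f ∈ A.domain) (hf' : f ∈ A.adjoint.domain),
      ‖A.adjoint ⟨f, hf'⟩‖ = ‖A ⟨f, hf⟩‖

/-- A densely defined operator `A` is normal if `dom A = dom A*` and
`‖A* h‖ = ‖A h‖` for all `h ∈ dom A` (such an operator is automatically closed). -/
def IsNormalOp {H : Type*} [NormedAddCommGroup H] [InnerProductSpace ℂ H]
    [CompleteSpace H] (A : H →ₗ.[ℂ] H) : Prop :=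
  Dense (A.domain : Set H) ∧ A.domain = A.adjoint.domain ∧
    ∀ (f : H) (hf : f ∈ A.domain) (hf' : f ∈ A.adjoint.domain),
      ‖A.adjoint ⟨f, hf'⟩‖ = ‖A ⟨f, hf⟩‖

section Aux

variable {V : Type*}

theorem evec_apply (u v : V) : (evec u : V → ℂ) v = if v = u then 1 else 0 := by
  simp [evec, lp.single_apply, Pi.single_apply]

theorem rpow_toReal_two (x : ℝ) : x ^ (2 : ℝ≥0∞).toReal = x ^ 2 := by
  rw [ENNReal.toReal_ofNat, show (2:ℝ) = ((2:ℕ):ℝ) by norm_num, Real.rpow_natCast]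

theorem toReal_two_pos : 0 < (2 : ℝ≥0∞).toReal := by
  rw [ENNReal.toReal_ofNat]; norm_num

theorem memℓp_two_iff (f : V → ℂ) : Memℓp f 2 ↔ Summable fun x => ‖f x‖ ^ 2 := by
  rw [memℓp_gen_iff toReal_two_pos]
  constructor <;> intro h <;> [skip; skip] <;>
    · refine h.congr fun x => ?_
      rw [rpow_toReal_two]

theorem l2_norm_sq (f : l2 V) : ‖f‖ ^ 2 = ∑' x, ‖(f : V → ℂ) x‖ ^ 2 := by
  have := lp.norm_rpow_eq_tsum toReal_two_pos f
  rw [rpow_toReal_two] at this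
  rw [this]
  exact tsum_congr fun x => rpow_toReal_two _

theorem l2_summable_sq (f : l2 V) : Summable fun x => ‖(f : V → ℂ) x‖ ^ 2 :=
  (memℓp_two_iff _).1 (lp.memℓp f)

variable (T : DirectedTree V) (lam : V → ℂ)

theorem par_eq {p u : V} (h : T.E p u) : T.par u = p :=
  T.parent_unique (T.par_spec ⟨p, h⟩) h

theorem lamMap_evec (u : V) : lamMap T lam (evec u : V → ℂ) =
    fun x => if T.HasParent x ∧ T.par x = u then lam x else 0 := by
  funext x
  simp only [lamMap, evec_apply]
  by_cases h : T.HasParent x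
  · by_cases h2 : T.par x = u <;> simp [h, h2]
  · simp [h]

theorem shift_coe (f : (shift T lam).domain) :
    ((shift T lam f : l2 V) : V → ℂ) = lamMap T lam (f : V → ℂ) := rfl

theorem mem_shift_domain_iff (f : l2 V) :
    f ∈ (shift T lam).domain ↔ Memℓp (lamMap T lam (f : V → ℂ)) 2 := Iff.rfl

end Aux
section Aux2

variable {V : Type*} (T : DirectedTree V) (lam : V → ℂ)

/-- From density of the domain, each coordinate functional is nonvanishing on the domain. -/
theorem exists_dom_coord_ne_zero (hd : Dense ((shift T lam).domain : Set (l2 V))) (v : V) :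
    ∃ f : l2 V, f ∈ (shift T lam).domain ∧ (f : V → ℂ) v ≠ 0 := by
  by_contra h
  push_neg at h
  have hcont : Continuous fun f : l2 V => ((f : V → ℂ) v) := by
    have : (fun f : l2 V => ((f : V → ℂ) v)) = fun f => (inner ℂ (evec v) f : ℂ) := by
      funext f
      rw [show (evec v : l2 V) = lp.single 2 v 1 from rfl, lp.inner_single_left]
      simp [RCLike.inner_apply]
    rw [this]
    exact (innerSL ℂ (evec v)).continuous
  have hclosed : IsClosed {f : l2 V | (f : V → ℂ) v = 0} :=
    isClosed_eq hcont continuous_const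
  have hsub : ((shift T lam).domain : Set (l2 V)) ⊆ {f : l2 V | (f : V → ℂ) v = 0} :=
    fun f hf => h f hf
  have : (Set.univ : Set (l2 V)) ⊆ {f : l2 V | (f : V → ℂ) v = 0} := by
    rw [← hd.closure_eq]
    exact hclosed.closure_subset_iff.2 hsub
  have := this (Set.mem_univ (evec v))
  simp only [Set.mem_setOf_eq, evec_apply, if_pos rfl] at this
  exact one_ne_zero this

theorem evec_mem_dom (hd : Dense ((shift T lam).domain : Set (l2 V))) (v : V) :
    evec v ∈ (shift T lam).domain := by
  obtain ⟨f, hf, hfv⟩ := exists_dom_coord_ne_zero T lam hd v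
  rw [mem_shift_domain_iff, memℓp_two_iff]
  have hsum : Summable fun x => ‖(f : V → ℂ) v‖⁻¹ ^ 2 * ‖lamMap T lam (f : V → ℂ) x‖ ^ 2 :=
    ((memℓp_two_iff _).1 hf).mul_left _
  refine Summable.of_nonneg_of_le (fun x => by positivity) (fun x => ?_) hsum
  rw [lamMap_evec]
  dsimp only
  by_cases hx : T.HasParent x ∧ T.par x = v
  · rw [if_pos hx]
    have : lamMap T lam (f : V → ℂ) x = lam x * (f : V → ℂ) v := by
      simp [lamMap, hx.1, hx.2]
    rw [this, norm_mul, mul_pow]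
    have hv : ‖(f : V → ℂ) v‖ ≠ 0 := norm_ne_zero_iff.2 hfv
    apply le_of_eq
    field_simp
  · rw [if_neg hx]
    have h0 : ‖(0:ℂ)‖ ^ 2 = 0 := by norm_num
    rw [h0]
    positivity

/-- the value of the adjoint at a basis vector -/
noncomputable def advec (v : V) : l2 V :=
  if T.HasParent v then (starRingEnd ℂ) (lam v) • evec (T.par v) else 0

theorem advec_inner (v : V) (f : (shift T lam).domain) :
    (inner ℂ (advec T lam v) ((f : l2 V)) : ℂ) = inner ℂ (evec v) ((shift T lam f : l2 V)) := by
  have hr : (inner ℂ (evec v) ((shift T lam f : l2 V)) : ℂ) = lamMap T lam (f : V → ℂ) v := by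
    rw [show (evec v : l2 V) = lp.single 2 v 1 from rfl, lp.inner_single_left]
    simp [RCLike.inner_apply, shift_coe]
  rw [hr]
  unfold advec
  by_cases h : T.HasParent v
  · rw [if_pos h, inner_smul_left]
    have : (inner ℂ (evec (T.par v)) ((f : l2 V)) : ℂ) = (f : V → ℂ) (T.par v) := by
      rw [show (evec (T.par v) : l2 V) = lp.single 2 (T.par v) 1 from rfl, lp.inner_single_left]
      simp [RCLike.inner_apply]
    rw [this]
    simp [lamMap, h]
  · rw [if_neg h, inner_zero_left]
    simp [lamMap, h]

theorem evec_mem_adj (v : V) : evec v ∈ (shift T lam).adjoint.domain :=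
  LinearPMap.mem_adjoint_domain_of_exists _ ⟨advec T lam v, fun f => advec_inner T lam v f⟩

theorem adj_evec (hd : Dense ((shift T lam).domain : Set (l2 V))) (v : V)
    (h : evec v ∈ (shift T lam).adjoint.domain) :
    (shift T lam).adjoint ⟨evec v, h⟩ = advec T lam v :=
  LinearPMap.adjoint_apply_eq hd _ fun f => advec_inner T lam v f

end Aux2
section Aux3

variable {V : Type*} (T : DirectedTree V) (lam : V → ℂ)

/-- the squared weights attached to the children of `v` -/
noncomputable def wfun (v : V) : V → ℝ :=
  fun x => if T.HasParent x ∧ T.par x = v then ‖lam x‖ ^ 2 else 0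

theorem wfun_nonneg (v x : V) : 0 ≤ wfun T lam v x := by
  unfold wfun; split_ifs <;> positivity

theorem lamMap_evec_normsq (v : V) :
    (fun x => ‖lamMap T lam (evec v : V → ℂ) x‖ ^ 2) = wfun T lam v := by
  funext x
  rw [lamMap_evec]
  unfold wfun
  dsimp only
  split_ifs with h
  · rfl
  · norm_num

theorem summable_wfun (hd : Dense ((shift T lam).domain : Set (l2 V))) (v : V) :
    Summable (wfun T lam v) := by
  rw [← lamMap_evec_normsq]
  have := evec_mem_dom T lam hd v
  rw [mem_shift_domain_iff, memℓp_two_iff] at this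
  exact this

theorem shift_evec_norm_sq (hd : Dense ((shift T lam).domain : Set (l2 V))) (v : V)
    (hv : evec v ∈ (shift T lam).domain) :
    ‖shift T lam ⟨evec v, hv⟩‖ ^ 2 = ∑' x, wfun T lam v x := by
  rw [l2_norm_sq, ← lamMap_evec_normsq]
  rfl

theorem norm_evec (v : V) : ‖(evec v : l2 V)‖ = 1 := by
  have := lp.norm_single (E := fun _ : V => ℂ) (p := 2) (by norm_num) v (1:ℂ)
  simpa [evec] using this

theorem norm_advec_sq (v : V) :
    ‖advec T lam v‖ ^ 2 = if T.HasParent v then ‖lam v‖ ^ 2 else 0 := by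
  unfold advec
  split_ifs with h
  · rw [norm_smul, norm_evec, mul_one]
    simp
  · simp

/-- STEP 1: the fundamental consequence of formal normality at basis vectors. -/
theorem W_eq (hfn : FormallyNormal (shift T lam)) (v : V) :
    ∑' x, wfun T lam v x = if T.HasParent v then ‖lam v‖ ^ 2 else 0 := by
  have hd := hfn.1
  have hdom := evec_mem_dom T lam hd v
  have hadj := evec_mem_adj T lam v
  have := hfn.2.2 (evec v) hdom hadj
  rw [adj_evec T lam hd v hadj] at this
  have h2 : ‖advec T lam v‖ ^ 2 = ‖shift T lam ⟨evec v, hdom⟩‖ ^ 2 := by rw [this]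
  rw [norm_advec_sq, shift_evec_norm_sq T lam hd v hdom] at h2
  rw [← h2]

end Aux3
section Aux4

variable {V : Type*} (T : DirectedTree V) (lam : V → ℂ)

theorem sibling_key (hfn : FormallyNormal (shift T lam)) {p u w : V}
    (hu : T.E p u) (hw : T.E p w) (huw : u ≠ w) (μ : ℂ) :
    ‖(starRingEnd ℂ) (lam u) + μ * (starRingEnd ℂ) (lam w)‖ ^ 2 =
      ‖lam u‖ ^ 2 + ‖μ‖ ^ 2 * ‖lam w‖ ^ 2 := by
  have hd := hfn.1
  have hpu : T.HasParent u := ⟨p, hu⟩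
  have hpw : T.HasParent w := ⟨p, hw⟩
  have hparu : T.par u = p := par_eq T hu
  have hparw : T.par w = p := par_eq T hw
  set f : l2 V := evec u + μ • evec w with hf
  have hfd : f ∈ (shift T lam).domain :=
    add_mem (evec_mem_dom T lam hd u) (Submodule.smul_mem _ μ (evec_mem_dom T lam hd w))
  have hfa : f ∈ (shift T lam).adjoint.domain :=
    add_mem (evec_mem_adj T lam u) (Submodule.smul_mem _ μ (evec_mem_adj T lam w))
  have hnorm := hfn.2.2 f hfd hfa
  -- adjoint side
  have hadjval : (shift T lam).adjoint ⟨f, hfa⟩ =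
      ((starRingEnd ℂ) (lam u) + μ * (starRingEnd ℂ) (lam w)) • evec p := by
    have hsplit : (⟨f, hfa⟩ : (shift T lam).adjoint.domain) =
        ⟨evec u, evec_mem_adj T lam u⟩ + μ • ⟨evec w, evec_mem_adj T lam w⟩ :=
      Subtype.ext rfl
    rw [hsplit, LinearPMap.map_add, LinearPMap.map_smul,
      adj_evec T lam hd u (evec_mem_adj T lam u), adj_evec T lam hd w (evec_mem_adj T lam w)]
    unfold advec
    rw [if_pos hpu, if_pos hpw, hparu, hparw, smul_smul, ← add_smul]
  have hadjnorm : ‖(shift T lam).adjoint ⟨f, hfa⟩‖ =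
      ‖(starRingEnd ℂ) (lam u) + μ * (starRingEnd ℂ) (lam w)‖ := by
    rw [hadjval, norm_smul, norm_evec, mul_one]
  -- shift side
  have hcoe : ∀ x, (f : V → ℂ) x =
      (if x = u then 1 else 0) + μ * (if x = w then 1 else 0) := by
    intro x
    rw [hf]
    have : ((evec u + μ • evec w : l2 V) : V → ℂ) x
        = (evec u : V → ℂ) x + μ * (evec w : V → ℂ) x := by
      rw [lp.coeFn_add, Pi.add_apply, lp.coeFn_smul, Pi.smul_apply, smul_eq_mul]
    rw [this, evec_apply, evec_apply]
  have hpt : ∀ x, ‖lamMap T lam (f : V → ℂ) x‖ ^ 2 =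
      wfun T lam u x + ‖μ‖ ^ 2 * wfun T lam w x := by
    intro x
    unfold lamMap wfun
    dsimp only
    by_cases hx : T.HasParent x
    · rw [if_pos hx, hcoe]
      by_cases h1 : T.par x = u
      · have h2 : T.par x ≠ w := by rw [h1]; exact huw
        rw [if_pos h1, if_neg h2, if_pos ⟨hx, h1⟩, if_neg (fun hc => h2 hc.2)]
        simp only [mul_zero, add_zero, mul_one]
      · by_cases h2 : T.par x = w
        · rw [if_neg h1, if_pos h2, if_neg (fun hc => h1 hc.2), if_pos ⟨hx, h2⟩]
          rw [zero_add, mul_one, norm_mul, mul_pow, zero_add]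
          ring
        · rw [if_neg h1, if_neg h2, if_neg (fun hc => h1 hc.2), if_neg (fun hc => h2 hc.2)]
          norm_num
    · rw [if_neg hx, if_neg (fun hc : _ ∧ _ => hx hc.1), if_neg (fun hc : _ ∧ _ => hx hc.1)]
      norm_num
  have hshiftnorm : ‖shift T lam ⟨f, hfd⟩‖ ^ 2 =
      (∑' x, wfun T lam u x) + ‖μ‖ ^ 2 * ∑' x, wfun T lam w x := by
    rw [l2_norm_sq]
    have : ∀ x, ‖((shift T lam ⟨f, hfd⟩ : l2 V) : V → ℂ) x‖ ^ 2 =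
        wfun T lam u x + ‖μ‖ ^ 2 * wfun T lam w x := by
      intro x
      rw [shift_coe]
      exact hpt x
    rw [tsum_congr this, Summable.tsum_add (summable_wfun T lam hd u)
      ((summable_wfun T lam hd w).mul_left _), tsum_mul_left]
  have := hnorm
  rw [hadjnorm] at this
  rw [this, hshiftnorm, W_eq T lam hfn u, W_eq T lam hfn w, if_pos hpu, if_pos hpw]

/-- STEP 2: two distinct siblings cannot both have nonzero weights. -/
theorem sibling (hfn : FormallyNormal (shift T lam)) {p u w : V}
    (hu : T.E p u) (hw : T.E p w) (huw : u ≠ w) : lam u = 0 ∨ lam w = 0 := by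
  have e1 := sibling_key T lam hfn hu hw huw 1
  have e2 := sibling_key T lam hfn hu hw huw Complex.I
  rw [one_mul, norm_one] at e1
  rw [Complex.norm_I] at e2
  rw [one_pow, one_mul] at e1 e2
  set a := lam u
  set b := lam w
  have hns : Complex.normSq a * Complex.normSq b = 0 := by
    rw [← Complex.normSq_eq_norm_sq] at e1 e2
    rw [← Complex.normSq_eq_norm_sq, ← Complex.normSq_eq_norm_sq] at e1 e2
    simp only [Complex.normSq_apply, Complex.add_re, Complex.add_im, Complex.mul_re,
      Complex.mul_im, Complex.conj_re, Complex.conj_im, Complex.I_re, Complex.I_im] at e1 e2 ⊢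
    nlinarith [e1, e2, sq_nonneg (a.re * b.re + a.im * b.im), sq_nonneg (a.re * b.im - a.im * b.re)]
  rcases mul_eq_zero.1 hns with h | h
  · exact Or.inl (Complex.normSq_eq_zero.1 h)
  · exact Or.inr (Complex.normSq_eq_zero.1 h)

end Aux4
section Aux5

variable {V : Type*} (T : DirectedTree V) (lam : V → ℂ)

theorem par_inj_nz (hfn : FormallyNormal (shift T lam)) {x y : V}
    (hx : T.HasParent x ∧ lam x ≠ 0) (hy : T.HasParent y ∧ lam y ≠ 0)
    (hxy : T.par x = T.par y) : x = y := by
  by_contra hne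
  have hEx : T.E (T.par x) x := T.par_spec hx.1
  have hEy : T.E (T.par x) y := hxy ▸ T.par_spec hy.1
  rcases sibling T lam hfn hEx hEy hne with h | h
  · exact hx.2 h
  · exact hy.2 h

/-- STEP 3: going up from a nonzero weight. -/
theorem step_up (hfn : FormallyNormal (shift T lam)) {v : V}
    (hv : T.HasParent v) (hl : lam v ≠ 0) :
    (T.HasParent (T.par v) ∧ lam (T.par v) ≠ 0) ∧ ‖lam (T.par v)‖ = ‖lam v‖ := by
  have hd := hfn.1
  set p := T.par v with hp
  have hwv : wfun T lam p v = ‖lam v‖ ^ 2 := by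
    unfold wfun; rw [if_pos ⟨hv, rfl⟩]
  -- the total sum over children of p is exactly ‖lam v‖ ^ 2
  have htot : ∑' x, wfun T lam p x = ‖lam v‖ ^ 2 := by
    rw [tsum_eq_single v]
    · exact hwv
    · intro b hb
      unfold wfun
      by_cases hc : T.HasParent b ∧ T.par b = p
      · rw [if_pos hc]
        by_contra hb0
        have hlb : lam b ≠ 0 := by
          intro h0; apply hb0; rw [h0]; norm_num
        exact hb (par_inj_nz T lam hfn ⟨hc.1, hlb⟩ ⟨hv, hl⟩ (hc.2.trans hp))
      · rw [if_neg hc]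
  have hW := W_eq T lam hfn p
  rw [htot] at hW
  have hpos : (0:ℝ) < ‖lam v‖ ^ 2 := by
    have := norm_pos_iff.2 hl
    positivity
  by_cases hpp : T.HasParent p
  · rw [if_pos hpp] at hW
    have hlp : lam p ≠ 0 := by
      intro h0
      rw [h0] at hW
      simp only [norm_zero, ne_eq, OfNat.ofNat_ne_zero, not_false_eq_true, zero_pow,
        pow_eq_zero_iff, norm_eq_zero] at hW
      exact hl hW
    exact ⟨⟨hpp, hlp⟩, (pow_left_inj₀ (norm_nonneg _) (norm_nonneg _) two_ne_zero).1 hW.symm⟩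
  · rw [if_neg hpp] at hW
    exact absurd hW (ne_of_gt hpos)

/-- every ancestor of a nonzero-weight vertex is a nonzero-weight vertex of the same modulus -/
theorem anc_nz (hfn : FormallyNormal (shift T lam)) {z u : V}
    (h : Relation.ReflTransGen T.E z u) (hu : T.HasParent u ∧ lam u ≠ 0) :
    (T.HasParent z ∧ lam z ≠ 0) ∧ ‖lam z‖ = ‖lam u‖ := by
  induction h using Relation.ReflTransGen.head_induction_on with
  | refl => exact ⟨hu, rfl⟩
  | head h' hrtg ih =>
    rename_i a c
    have hpc : T.HasParent c := ⟨a, h'⟩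
    have hac : T.par c = a := par_eq T h'
    have := step_up T lam hfn hpc ih.1.2
    rw [hac] at this
    exact ⟨this.1, this.2.trans ih.2⟩

theorem up_of_step {z b w : V} (hzb : Relation.ReflTransGen T.E z b) (hwb : T.E w b) :
    Relation.ReflTransGen T.E z w ∨ z = b := by
  rcases hzb.cases_tail with h | ⟨c, hzc, hcb⟩
  · exact Or.inr h.symm
  · exact Or.inl (T.parent_unique hcb hwb ▸ hzc)

/-- any two vertices in a directed tree have a common ancestor -/
theorem common_anc (u w : V) :
    ∃ z, Relation.ReflTransGen T.E z u ∧ Relation.ReflTransGen T.E z w := by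
  have h := T.connected u w
  induction h with
  | refl => exact ⟨u, Relation.ReflTransGen.refl, Relation.ReflTransGen.refl⟩
  | tail hub hr ih =>
    rename_i b w'
    obtain ⟨z, hzu, hzb⟩ := ih
    rcases hr with h | h
    · exact ⟨z, hzu, hzb.tail h⟩
    · rcases up_of_step T hzb h with hzw | hzb'
      · exact ⟨z, hzu, hzw⟩
      · exact ⟨w', (Relation.ReflTransGen.single h).trans (hzb' ▸ hzu),
          Relation.ReflTransGen.refl⟩

/-- STEP 4: all nonzero weights have the same modulus -/
theorem const_mod (hfn : FormallyNormal (shift T lam)) {u w : V}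
    (hu : T.HasParent u ∧ lam u ≠ 0) (hw : T.HasParent w ∧ lam w ≠ 0) :
    ‖lam u‖ = ‖lam w‖ := by
  obtain ⟨z, hzu, hzw⟩ := common_anc T u w
  rw [← (anc_nz T lam hfn hzu hu).2, (anc_nz T lam hfn hzw hw).2]

/-- STEP 5: a vertex has a nonzero-weight child iff it has nonzero weight -/
theorem nz_child_iff (hfn : FormallyNormal (shift T lam)) (v : V) :
    (∃ x, (T.HasParent x ∧ lam x ≠ 0) ∧ T.par x = v) ↔
      (T.HasParent v ∧ lam v ≠ 0) := by
  constructor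
  · rintro ⟨x, hx, hpx⟩
    have := (step_up T lam hfn hx.1 hx.2).1
    rwa [hpx] at this
  · rintro ⟨hv, hl⟩
    have hW := W_eq T lam hfn v
    rw [if_pos hv] at hW
    have hpos : (0:ℝ) < ‖lam v‖ ^ 2 := by
      have := norm_pos_iff.2 hl
      positivity
    by_contra hno
    push_neg at hno
    have hzero : ∀ x, wfun T lam v x = 0 := by
      intro x
      unfold wfun
      by_cases hc : T.HasParent x ∧ T.par x = v
      · rw [if_pos hc]
        by_cases h0 : lam x = 0
        · rw [h0]; norm_num
        · exact absurd hc.2 (hno x ⟨hc.1, h0⟩)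
      · rw [if_neg hc]
    rw [tsum_congr hzero, tsum_zero] at hW
    exact absurd hW.symm (ne_of_gt hpos)

end Aux5
section Aux6

variable {V : Type*} (T : DirectedTree V) (lam : V → ℂ)

/-- STEP 6: the uniform bound on the action of the shift -/
theorem lamMap_summable_and_bound (hfn : FormallyNormal (shift T lam)) {u0 : V}
    (hu0 : T.HasParent u0 ∧ lam u0 ≠ 0) (f : l2 V) :
    Summable (fun x => ‖lamMap T lam (f : V → ℂ) x‖ ^ 2) ∧
      ∑' x, ‖lamMap T lam (f : V → ℂ) x‖ ^ 2 ≤ ‖lam u0‖ ^ 2 * ‖f‖ ^ 2 := by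
  set c : ℝ := ‖lam u0‖ with hc
  set NZ : Set V := {x | T.HasParent x ∧ lam x ≠ 0} with hNZ
  set F : V → ℝ := fun x => c ^ 2 * ‖(f : V → ℂ) (T.par x)‖ ^ 2 with hF
  set B : V → ℝ := fun v => c ^ 2 * ‖(f : V → ℂ) v‖ ^ 2 with hB
  have hbase : Summable B := (l2_summable_sq f).mul_left _
  have hinj : Function.Injective (fun x : NZ => T.par (x : V)) := by
    intro x y hxy
    exact Subtype.ext (par_inj_nz T lam hfn x.2 y.2 hxy)
  have hcomp : Summable (F ∘ (Subtype.val : NZ → V)) := by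
    have := hbase.comp_injective hinj
    exact this
  have hgsum : Summable (NZ.indicator F) := summable_subtype_iff_indicator.1 hcomp
  have hle : ∀ x, ‖lamMap T lam (f : V → ℂ) x‖ ^ 2 ≤ NZ.indicator F x := by
    intro x
    by_cases hx : x ∈ NZ
    · rw [Set.indicator_of_mem hx]
      have hcx : ‖lam x‖ = c := const_mod T lam hfn hx hu0
      have : lamMap T lam (f : V → ℂ) x = lam x * (f : V → ℂ) (T.par x) := by
        simp [lamMap, hx.1]
      rw [this, norm_mul, mul_pow, hcx]
    · rw [Set.indicator_of_notMem hx]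
      have : lamMap T lam (f : V → ℂ) x = 0 := by
        unfold lamMap
        by_cases hp : T.HasParent x
        · have hl : lam x = 0 := by
            by_contra h
            exact hx ⟨hp, h⟩
          rw [if_pos hp, hl, zero_mul]
        · rw [if_neg hp]
      rw [this]
      norm_num
  have hsum : Summable (fun x => ‖lamMap T lam (f : V → ℂ) x‖ ^ 2) :=
    Summable.of_nonneg_of_le (fun x => by positivity) hle hgsum
  refine ⟨hsum, ?_⟩
  have h1 : ∑' x, ‖lamMap T lam (f : V → ℂ) x‖ ^ 2 ≤ ∑' x, NZ.indicator F x :=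
    hsum.tsum_le_tsum hle hgsum
  have h2 : ∑' x, NZ.indicator F x = ∑' x : NZ, F (x : V) := (tsum_subtype NZ F).symm
  have h3 : ∑' x : NZ, F (x : V) ≤ ∑' v, B v := by
    have : (F ∘ (Subtype.val : NZ → V)) = B ∘ (fun x : NZ => T.par (x : V)) := rfl
    calc ∑' x : NZ, F (x : V) = tsum (B ∘ (fun x : NZ => T.par (x : V))) := by
          rw [← this]; rfl
      _ ≤ tsum B := tsum_comp_le_tsum_of_inj hbase (fun v => by positivity) hinj
  have h4 : ∑' v, B v = c ^ 2 * ‖f‖ ^ 2 := by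
    rw [hB, tsum_mul_left, l2_norm_sq]
  calc ∑' x, ‖lamMap T lam (f : V → ℂ) x‖ ^ 2 ≤ ∑' x, NZ.indicator F x := h1
    _ = ∑' x : NZ, F (x : V) := h2
    _ ≤ ∑' v, B v := h3
    _ = c ^ 2 * ‖f‖ ^ 2 := h4

end Aux6
section Aux7

variable {V : Type*} (T : DirectedTree V) (lam : V → ℂ)

/-- the shift as an everywhere-defined bounded operator -/
noncomputable def Nop (hfn : FormallyNormal (shift T lam)) (u0 : V)
    (hu0 : T.HasParent u0 ∧ lam u0 ≠ 0) : l2 V →L[ℂ] l2 V := by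
  refine LinearMap.mkContinuous
    { toFun := fun f => (⟨lamMap T lam (f : V → ℂ),
        (memℓp_two_iff _).2 (lamMap_summable_and_bound T lam hfn hu0 f).1⟩ : l2 V)
      map_add' := ?_
      map_smul' := ?_ } ‖lam u0‖ ?_
  · intro f g
    apply Subtype.ext
    exact lamMap_add T lam _ _
  · intro c f
    apply Subtype.ext
    exact lamMap_smul T lam _ _
  · intro f
    refine le_of_pow_le_pow_left₀ two_ne_zero (by positivity) ?_
    rw [mul_pow]
    refine le_trans (le_of_eq ?_) (lamMap_summable_and_bound T lam hfn hu0 f).2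
    exact l2_norm_sq _

theorem Nop_coe (hfn : FormallyNormal (shift T lam)) (u0 : V)
    (hu0 : T.HasParent u0 ∧ lam u0 ≠ 0) (f : l2 V) :
    ((Nop T lam hfn u0 hu0 f : l2 V) : V → ℂ) = lamMap T lam (f : V → ℂ) := rfl

/-- the explicit formula for the adjoint of the bounded shift -/
noncomputable def Mfun (g : l2 V) (v : V) : ℂ :=
  if h : ∃ x, (T.HasParent x ∧ lam x ≠ 0) ∧ T.par x = v then
    (starRingEnd ℂ) (lam h.choose) * (g : V → ℂ) h.choose else 0

theorem adjoint_Nop_apply (hfn : FormallyNormal (shift T lam)) (u0 : V)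
    (hu0 : T.HasParent u0 ∧ lam u0 ≠ 0) (g : l2 V) (v : V) :
    ((ContinuousLinearMap.adjoint (Nop T lam hfn u0 hu0) g : l2 V) : V → ℂ) v =
      Mfun T lam g v := by
  set N := Nop T lam hfn u0 hu0 with hN
  set h := ContinuousLinearMap.adjoint N g with hh
  have h1 : (inner ℂ h (evec v) : ℂ) = inner ℂ g (N (evec v)) :=
    ContinuousLinearMap.adjoint_inner_left N (evec v) g
  have h2 : (inner ℂ h (evec v) : ℂ) = (starRingEnd ℂ) ((h : V → ℂ) v) := by
    rw [show (evec v : l2 V) = lp.single 2 v 1 from rfl, lp.inner_single_right]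
    simp [RCLike.inner_apply]
  have h3 : (inner ℂ g (N (evec v)) : ℂ) =
      ∑' x, (starRingEnd ℂ) ((g : V → ℂ) x) *
        (if T.HasParent x ∧ T.par x = v then lam x else 0) := by
    rw [lp.inner_eq_tsum]
    refine tsum_congr fun x => ?_
    rw [RCLike.inner_apply, mul_comm]
    congr 1
    rw [hN, Nop_coe, lamMap_evec]
  by_cases hex : ∃ x, (T.HasParent x ∧ lam x ≠ 0) ∧ T.par x = v
  · set x0 := hex.choose with hx0
    have hx0s := hex.choose_spec
    have h4 : ∑' x, (starRingEnd ℂ) ((g : V → ℂ) x) *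
        (if T.HasParent x ∧ T.par x = v then lam x else 0) =
        (starRingEnd ℂ) ((g : V → ℂ) x0) * lam x0 := by
      rw [tsum_eq_single x0]
      · rw [if_pos ⟨hx0s.1.1, hx0s.2⟩]
      · intro b hb
        by_cases hc : T.HasParent b ∧ T.par b = v
        · by_cases h0 : lam b = 0
          · rw [if_pos hc, h0, mul_zero]
          · exact absurd (par_inj_nz T lam hfn ⟨hc.1, h0⟩ hx0s.1
              (hc.2.trans hx0s.2.symm)) hb
        · rw [if_neg hc, mul_zero]
    have heq : (starRingEnd ℂ) ((h : V → ℂ) v) =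
        (starRingEnd ℂ) ((g : V → ℂ) x0) * lam x0 := by
      rw [← h2, h1, h3, h4]
    have := congrArg (starRingEnd ℂ) heq
    simp only [RingHomCompTriple.comp_apply, RingHom.id_apply, starRingEnd_self_apply,
      map_mul] at this
    rw [Mfun, dif_pos hex]
    rw [this]
    ring
  · have h4 : ∑' x, (starRingEnd ℂ) ((g : V → ℂ) x) *
        (if T.HasParent x ∧ T.par x = v then lam x else 0) = 0 := by
      rw [tsum_congr (fun b => ?_), tsum_zero]
      by_cases hc : T.HasParent b ∧ T.par b = v
      · by_cases h0 : lam b = 0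
        · rw [if_pos hc, h0, mul_zero]
        · exact absurd ⟨b, ⟨hc.1, h0⟩, hc.2⟩ hex
      · rw [if_neg hc, mul_zero]
    have heq : (starRingEnd ℂ) ((h : V → ℂ) v) = 0 := by rw [← h2, h1, h3, h4]
    have : (h : V → ℂ) v = 0 := by
      have := congrArg (starRingEnd ℂ) heq
      simpa using this
    rw [Mfun, dif_neg hex, this]

end Aux7
section Aux8

variable {V : Type*} (T : DirectedTree V) (lam : V → ℂ)

theorem lamMap_apply (f : V → ℂ) (v : V) :
    lamMap T lam f v = if T.HasParent v then lam v * f (T.par v) else 0 := rfl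

theorem Nop_commute (hfn : FormallyNormal (shift T lam)) (u0 : V)
    (hu0 : T.HasParent u0 ∧ lam u0 ≠ 0) :
    ContinuousLinearMap.adjoint (Nop T lam hfn u0 hu0) * Nop T lam hfn u0 hu0 =
      Nop T lam hfn u0 hu0 * ContinuousLinearMap.adjoint (Nop T lam hfn u0 hu0) := by
  set N := Nop T lam hfn u0 hu0 with hNdef
  refine ContinuousLinearMap.ext fun g => ?_
  apply Subtype.ext
  funext v
  show ((ContinuousLinearMap.adjoint N (N g) : l2 V) : V → ℂ) v =
    ((N (ContinuousLinearMap.adjoint N g) : l2 V) : V → ℂ) v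
  have hg : ((ContinuousLinearMap.adjoint N g : l2 V) : V → ℂ) =
      fun x => Mfun T lam g x :=
    funext fun x => adjoint_Nop_apply T lam hfn u0 hu0 g x
  rw [adjoint_Nop_apply T lam hfn u0 hu0 (N g) v, hNdef, Nop_coe, hg]
  have hcz : ∀ z : ℂ, (starRingEnd ℂ) z * z = ((‖z‖ ^ 2 : ℝ) : ℂ) := fun z => by
    rw [mul_comm, Complex.mul_conj, Complex.normSq_eq_norm_sq]
  by_cases hv : T.HasParent v ∧ lam v ≠ 0
  · have hex : ∃ x, (T.HasParent x ∧ lam x ≠ 0) ∧ T.par x = v :=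
      (nz_child_iff T lam hfn v).2 hv
    have hex2 : ∃ x, (T.HasParent x ∧ lam x ≠ 0) ∧ T.par x = T.par v := ⟨v, hv, rfl⟩
    rw [Mfun, dif_pos hex, lamMap_apply, if_pos hv.1, Mfun, dif_pos hex2]
    have hx0 := hex.choose_spec
    have hx1 := hex2.choose_spec
    have hx1v : hex2.choose = v := par_inj_nz T lam hfn hx1.1 hv hx1.2
    have h5 : ((Nop T lam hfn u0 hu0 g : l2 V) : V → ℂ) hex.choose =
        lam hex.choose * (g : V → ℂ) v := by
      rw [Nop_coe, lamMap_apply, if_pos hx0.1.1, hx0.2]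
    rw [h5, hx1v]
    have h6 : ‖lam hex.choose‖ = ‖lam v‖ := by
      have := const_mod T lam hfn hx0.1 hv
      exact this
    calc (starRingEnd ℂ) (lam hex.choose) * (lam hex.choose * (g : V → ℂ) v)
        = ((starRingEnd ℂ) (lam hex.choose) * lam hex.choose) * (g : V → ℂ) v := by ring
      _ = ((‖lam v‖ ^ 2 : ℝ) : ℂ) * (g : V → ℂ) v := by rw [hcz, h6]
      _ = lam v * ((starRingEnd ℂ) (lam v) * (g : V → ℂ) v) := by
          rw [← hcz]
          ring
  · have hex : ¬∃ x, (T.HasParent x ∧ lam x ≠ 0) ∧ T.par x = v := fun h =>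
      hv ((nz_child_iff T lam hfn v).1 h)
    rw [Mfun, dif_neg hex, lamMap_apply]
    by_cases hp : T.HasParent v
    · have hl : lam v = 0 := by
        by_contra h
        exact hv ⟨hp, h⟩
      rw [if_pos hp, hl, zero_mul]
    · rw [if_neg hp]

end Aux8

/-- a nonzero formally normal weighted shift on a directed tree satisfies
`sup_v ‖S_λ e_v‖ < ∞`, is bounded on all of `ℓ²(V)`, and is normal. -/
theorem formallyNormal_implies_bounded_normal {V : Type*} (T : DirectedTree V) (lam : V → ℂ)
    (hfn : FormallyNormal (shift T lam))
    (hnz : ∃ f : (shift T lam).domain, shift T lam f ≠ 0) :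
    (∃ C : ℝ, ∀ (v : V) (hv : evec v ∈ (shift T lam).domain),
        ‖shift T lam ⟨evec v, hv⟩‖ ≤ C) ∧
    (shift T lam).domain = ⊤ ∧
    ∃ N : l2 V →L[ℂ] l2 V,
      (∀ f : (shift T lam).domain, N (f : l2 V) = shift T lam f) ∧ IsStarNormal N := by
  obtain ⟨f0, hf0⟩ := hnz
  have hex0 : ∃ x, T.HasParent x ∧ lam x ≠ 0 := by
    by_contra h
    push_neg at h
    apply hf0
    apply Subtype.ext
    funext x
    show lamMap T lam ((f0 : l2 V) : V → ℂ) x = 0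
    rw [lamMap_apply]
    by_cases hp : T.HasParent x
    · rw [if_pos hp, h x hp, zero_mul]
    · rw [if_neg hp]
  obtain ⟨u0, hu0p, hu0l⟩ := hex0
  have hu0 : T.HasParent u0 ∧ lam u0 ≠ 0 := ⟨hu0p, hu0l⟩
  refine ⟨⟨‖lam u0‖, ?_⟩, ?_, ?_⟩
  · intro v hv
    refine le_of_pow_le_pow_left₀ two_ne_zero (norm_nonneg _) ?_
    have h1 : ‖shift T lam ⟨evec v, hv⟩‖ ^ 2 =
        ∑' x, ‖lamMap T lam ((evec v : l2 V) : V → ℂ) x‖ ^ 2 := by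
      rw [l2_norm_sq]; rfl
    have h2 := (lamMap_summable_and_bound T lam hfn hu0 (evec v)).2
    rw [norm_evec] at h2
    rw [h1]
    simpa using h2
  · rw [eq_top_iff]
    intro f _
    rw [mem_shift_domain_iff, memℓp_two_iff]
    exact (lamMap_summable_and_bound T lam hfn hu0 f).1
  · refine ⟨Nop T lam hfn u0 hu0, fun f => ?_, ?_⟩
    · apply Subtype.ext
      rfl
    · refine ⟨?_⟩
      rw [ContinuousLinearMap.star_eq_adjoint]
      exact Nop_commute T lam hfn u0 hu0
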